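/- For a ∈ A_M and b ∈ A_1, Φ_{a∘b}^{−1} = Φ_a^{−1} ∘ Φ_b^{−1}: for every finite or infinite {0,1}-word x whose first digit is 1, Φ_{a∘b}^{−1}(x) = Φ_a^{−1}(Φ_b^{−1}(x)). (Here a∘b ∈ A_M, and Φ_b^{−1}(x) is a {0,1}-word whose first digit is 1, so both sides are defined.) -/

import Mathlib

open Filter Set

/-- Strict lexicographic order on digit sequences (0-indexed). -/
def seqLt (x y : ℕ → ℕ) : Prop := ∃ n, (∀ i < n, x i = y i) ∧ x n < y n

/-- Weak lexicographic order on digit sequences. -/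
def seqLe (x y : ℕ → ℕ) : Prop := seqLt x y ∨ x = y

/-- The sequence w0^∞ associated with a finite word. -/
def wordSeq (w : List ℕ) : ℕ → ℕ := fun i => w.getD i 0

/-- Words are compared via w ↦ w0^∞. -/
def wordLt (u v : List ℕ) : Prop := seqLt (wordSeq u) (wordSeq v)

def wordLe (u v : List ℕ) : Prop := seqLe (wordSeq u) (wordSeq v)

/-- Reflection of a sequence: each digit c is replaced by M - c. -/
def reflSeq (M : ℕ) (x : ℕ → ℕ) : ℕ → ℕ := fun i => M - x i

/-- Reflection of a word. -/
def reflW (M : ℕ) (w : List ℕ) : List ℕ := w.map (fun c => M - c)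

/-- w⁺ : add one to the last digit. -/
def wplus (w : List ℕ) : List ℕ := w.dropLast ++ [w.getLast! + 1]

/-- w⁻ : subtract one from the last digit. -/
def wminus (w : List ℕ) : List ℕ := w.dropLast ++ [w.getLast! - 1]

/-- n-fold left shift σⁿ. -/
def shiftn (x : ℕ → ℕ) (n : ℕ) : ℕ → ℕ := fun i => x (n + i)

/-- The prefix of length n of a sequence, as a word. -/
def pref (x : ℕ → ℕ) (n : ℕ) : List ℕ := (List.range n).map x

/-- The periodic sequence w^∞. -/
def periodic (w : List ℕ) : ℕ → ℕ := fun i => w.getD (i % w.length) 0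

/-- The eventually periodic sequence u v^∞. -/
def wordThenPer (u v : List ℕ) : ℕ → ℕ :=
  fun i => if i < u.length then u.getD i 0 else v.getD ((i - u.length) % v.length) 0

/-- A fundamental word over the alphabet {0,…,M}. -/
def IsFundamental (M : ℕ) (a : List ℕ) : Prop :=
  (∀ d ∈ a, d ≤ M) ∧
  ((a.length = 1 ∧ 2 ≤ M ∧ M - a.head! ≤ a.head! ∧ a.head! < M) ∨
   (2 ≤ a.length ∧ ∀ i, 1 ≤ i → i < a.length →
     wordLe (reflW M (a.take (a.length - i))) (a.drop i) ∧
     wordLt (a.drop i) (a.take (a.length - i))))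

/-- The block emitted by the two-state automaton computing Φ_a⁻¹, as a function of the previous
bit (`0` at the start, so that the automaton is in state A after a `1` and in state B after
a `0`) and the current bit: (1,1) ↦ overline(a), (1,0) ↦ overline(a⁺), (0,1) ↦ a⁺, (0,0) ↦ a. -/
def block (M : ℕ) (a : List ℕ) (prev cur : ℕ) : List ℕ :=
  if prev = 1 then (if cur = 1 then reflW M a else reflW M (wplus a))
  else (if cur = 1 then wplus a else a)

/-- Φ_a⁻¹ applied to a finite {0,1}-word b (whose first digit should be 1):
the concatenation of the blocks emitted by the automaton. -/
def phiInv (M : ℕ) (a : List ℕ) (b : List ℕ) : List ℕ :=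
  (List.range b.length).flatMap
    (fun i => block M a (if i = 0 then 0 else b.getD (i - 1) 0) (b.getD i 0))

/-- Φ_a⁻¹ applied to an infinite {0,1}-sequence b (whose first digit should be 1). -/
def phiInvSeq (M : ℕ) (a : List ℕ) (b : ℕ → ℕ) : ℕ → ℕ :=
  fun j =>
    (block M a (if j / a.length = 0 then 0 else b (j / a.length - 1)) (b (j / a.length))).getD
      (j % a.length) 0

/-- The set V = {x ∈ Ω_M : overline(x) ≼ σⁿ(x) ≼ x for all n ≥ 0}. -/
def Vset (M : ℕ) : Set (ℕ → ℕ) :=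
  {x | (∀ i, x i ≤ M) ∧ ∀ n, seqLe (reflSeq M x) (shiftn x n) ∧ seqLe (shiftn x n) x}

/-- An irreducible sequence (a_i) ∈ V: whenever a_j > 0 and (a_1…a_j⁻)^∞ ∈ V, one has
a_1…a_j(overline(a_1…a_j)⁺)^∞ ≺ (a_i). -/
def IrreducibleSeq (M : ℕ) (x : ℕ → ℕ) : Prop :=
  x ∈ Vset M ∧
  ∀ j, 1 ≤ j → 0 < x (j - 1) → periodic (wminus (pref x j)) ∈ Vset M →
    seqLt (wordThenPer (pref x j) (wplus (reflW M (pref x j)))) x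

/-- An irreducible fundamental word: one that is not a composition c∘d with c ∈ A_M, d ∈ A_1. -/
def IrreducibleWord (M : ℕ) (a : List ℕ) : Prop :=
  IsFundamental M a ∧
  ¬∃ c d : List ℕ, IsFundamental M c ∧ IsFundamental 1 d ∧ a = phiInv M c d

/-- a is the quasi-greedy q-expansion of 1 over alphabet {0,…,M}: the lexicographically largest
sequence with digits ≤ M, not ending in 0^∞, with Σ a_i q^{-i} = 1. -/
def isQuasiGreedy (M : ℕ) (q : ℝ) (a : ℕ → ℕ) : Prop :=
  (∀ i, a i ≤ M) ∧ (∀ N, ∃ i, N ≤ i ∧ a i ≠ 0) ∧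
  (∑' i : ℕ, (a i : ℝ) / q ^ (i + 1)) = 1 ∧
  ∀ b : ℕ → ℕ, (∀ i, b i ≤ M) → (∀ N, ∃ i, N ≤ i ∧ b i ≠ 0) →
    (∑' i : ℕ, (b i : ℝ) / q ^ (i + 1)) = 1 → seqLe b a

open Classical in
/-- The quasi-greedy expansion α(q) (well defined for q ∈ (1, M+1]). -/
noncomputable def alphaF (M : ℕ) (q : ℝ) : ℕ → ℕ :=
  if h : ∃ a, isQuasiGreedy M q a then h.choose else fun _ => 0

/-- The shifted Thue–Morse sequence: τ_i = (sum of binary digits of i) mod 2, τ_0 = 0. -/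
def tau (i : ℕ) : ℕ := (Nat.digits 2 i).sum % 2

/-- λ_i = k + τ_i - τ_{i-1} if M = 2k, and k + τ_i if M = 2k+1. -/
def lam (M i : ℕ) : ℕ := if M % 2 = 0 then M / 2 + tau i - tau (i - 1) else M / 2 + tau i

/-- The sequence (λ_i)_{i≥1} = α(q_KL), 0-indexed. -/
def lamSeq (M : ℕ) : ℕ → ℕ := fun n => lam M (n + 1)

/-- The sequence (τ_i)_{i≥1}, 0-indexed. -/
def tauSeq : ℕ → ℕ := fun n => tau (n + 1)

/-- The unit lift u_M: the word k if M = 2k, and (k+1)k if M = 2k+1. -/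
def unitLift (M : ℕ) : List ℕ := if M % 2 = 0 then [M / 2] else [M / 2 + 1, M / 2]

/-- α(q_n') = λ_1…λ_{2^{n-1}}(overline(λ_1…λ_{2^{n-1}})⁺)^∞ for M even, and
λ_1…λ_{2^n}(overline(λ_1…λ_{2^n})⁺)^∞ for M odd (n ≥ 1). -/
def alphaQn (M n : ℕ) : ℕ → ℕ :=
  wordThenPer (pref (lamSeq M) (if M % 2 = 0 then 2 ^ (n - 1) else 2 ^ n))
    (wplus (reflW M (pref (lamSeq M) (if M % 2 = 0 then 2 ^ (n - 1) else 2 ^ n))))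

/-- Ũ_q = {x ∈ Ω_M : overline(α(q)) ≺ σⁿ(x) ≺ α(q) for all n ≥ 0}. -/
def Utilde (M : ℕ) (q : ℝ) : Set (ℕ → ℕ) :=
  {x | (∀ i, x i ≤ M) ∧
    ∀ n, seqLt (reflSeq M (alphaF M q)) (shiftn x n) ∧ seqLt (shiftn x n) (alphaF M q)}

/-- V_q = {x ∈ Ω_M : overline(α(q)) ≼ σⁿ(x) ≼ α(q) for all n ≥ 0}. -/
def VqSet (M : ℕ) (q : ℝ) : Set (ℕ → ℕ) :=
  {x | (∀ i, x i ≤ M) ∧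
    ∀ n, seqLe (reflSeq M (alphaF M q)) (shiftn x n) ∧ seqLe (shiftn x n) (alphaF M q)}

/-- B_n(X): the set of length-n prefixes of sequences in X. -/
def prefixSet (X : Set (ℕ → ℕ)) (n : ℕ) : Set (List ℕ) := (fun x => pref x n) '' X

/-- Topological entropy h(X) = lim (log #B_n(X))/n (the limit exists for shift-invariant X,
in which case it coincides with the limsup used here). -/
noncomputable def entropyOf (X : Set (ℕ → ℕ)) : ℝ :=
  Filter.atTop.limsup fun n : ℕ => Real.log (Nat.card ↥(prefixSet X n)) / n

/-- The entropy function H(q) = h(Ũ_q). -/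
noncomputable def Hent (M : ℕ) (q : ℝ) : ℝ := entropyOf (Utilde M q)

/-- c_M = 1 for even M, 1/2 for odd M. -/
noncomputable def cM (M : ℕ) : ℝ := if M % 2 = 0 then 1 else 1 / 2

/-- The fundamental interval J_a = [q_L(a), q_R(a)], described via the characterizations
α(q_L(a)) = a^∞ and α(q_R(a)) = a⁺(overline(a))^∞. -/
def Jset (M : ℕ) (a : List ℕ) : Set ℝ :=
  {q | ∃ qL qR : ℝ, qL ∈ Set.Ioc (1:ℝ) ((M:ℝ)+1) ∧ qR ∈ Set.Ioc (1:ℝ) ((M:ℝ)+1) ∧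
    alphaF M qL = periodic a ∧ alphaF M qR = wordThenPer (wplus a) (reflW M a) ∧
    q ∈ Set.Icc qL qR}

/-- The word w occurs (as a factor) in some sequence of X. -/
def occursIn (w : List ℕ) (X : Set (ℕ → ℕ)) : Prop :=
  ∃ x ∈ X, ∃ k, ∀ i < w.length, x (k + i) = w.getD i 0

/-- [pL, pR] is an entropy plateau: a maximal interval in (1, M+1] on which H is positive
and constant. -/
def IsPlateau (M : ℕ) (pL pR : ℝ) : Prop :=
  pL ≤ pR ∧ Set.Icc pL pR ⊆ Set.Ioc 1 ((M:ℝ)+1) ∧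
  (∀ q ∈ Set.Icc pL pR, 0 < Hent M q ∧ Hent M q = Hent M pL) ∧
  ∀ S : Set ℝ, S.OrdConnected → S ⊆ Set.Ioc 1 ((M:ℝ)+1) →
    (∀ q ∈ S, 0 < Hent M q) → (∀ q ∈ S, ∀ q' ∈ S, Hent M q = Hent M q') →
    Set.Icc pL pR ⊆ S → S = Set.Icc pL pR

/-- An n-irreducible word (n ≥ 1): a = u_M ∘ (10)^{∘(n-1)} ∘ b with b ∈ A_1 irreducible. -/
def nIrreducibleWord (M n : ℕ) (a : List ℕ) : Prop :=
  ∃ b : List ℕ, IrreducibleWord 1 b ∧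
    a = phiInv M ((fun w => phiInv M w [1, 0])^[n - 1] (unitLift M)) b


namespace Statement3Aux

/-- last digit of a word, with default `p` for the empty word. -/
def lastD (w : List ℕ) (p : ℕ) : ℕ := if w = [] then p else w.getD (w.length - 1) 0

/-- The automaton run with a general initial previous bit `p`. -/
def run (M : ℕ) (a : List ℕ) (p : ℕ) (w : List ℕ) : List ℕ :=
  (List.range w.length).flatMap
    (fun i => block M a (if i = 0 then p else w.getD (i - 1) 0) (w.getD i 0))

lemma phiInv_eq_run (M : ℕ) (a w : List ℕ) : phiInv M a w = run M a 0 w := rfl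

lemma getLast!_concat (u : List ℕ) (x : ℕ) : (u ++ [x]).getLast! = x := by
  cases u with
  | nil => rfl
  | cons a t => rw [List.cons_append, List.getLast!_cons_eq_getLastD, List.getLastD_concat]

lemma wplus_concat (u : List ℕ) (x : ℕ) : wplus (u ++ [x]) = u ++ [x + 1] := by
  rw [wplus, List.dropLast_concat, getLast!_concat]

lemma getD_concat_last (u : List ℕ) (x : ℕ) :
    (u ++ [x]).getD ((u ++ [x]).length - 1) 0 = x := by
  rw [List.length_append]
  simp only [List.length_cons, List.length_nil]
  rw [List.getD_append_right _ _ _ _ (by omega)]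
  simp

lemma exists_concat {w : List ℕ} (hw : w ≠ []) : ∃ u x, w = u ++ [x] := by
  induction w using List.reverseRecOn with
  | nil => exact absurd rfl hw
  | append_singleton u x _ => exact ⟨u, x, rfl⟩

lemma wplus_append {u w : List ℕ} (hw : w ≠ []) : wplus (u ++ w) = u ++ wplus w := by
  obtain ⟨v, x, rfl⟩ := exists_concat hw
  rw [← List.append_assoc, wplus_concat, wplus_concat, List.append_assoc]

lemma lastD_append {u v : List ℕ} (p : ℕ) (hv : v ≠ []) : lastD (u ++ v) p = lastD v p := by
  have hl : 0 < v.length := List.length_pos_iff.2 hv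
  rw [lastD, lastD, if_neg (by simp [hv]), if_neg hv, List.length_append,
    List.getD_append_right _ _ _ _ (by omega)]
  congr 1
  omega

lemma reflW_concat (M : ℕ) (u : List ℕ) (x : ℕ) :
    reflW M (u ++ [x]) = reflW M u ++ [M - x] := by
  simp [reflW]

lemma length_wplus {a : List ℕ} (ha : a ≠ []) : (wplus a).length = a.length := by
  have : 0 < a.length := List.length_pos_iff.2 ha
  simp [wplus]
  omega

lemma length_reflW (M : ℕ) (w : List ℕ) : (reflW M w).length = w.length := by
  simp [reflW]

lemma length_block {M : ℕ} {a : List ℕ} (ha : a ≠ []) (p q : ℕ) :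
    (block M a p q).length = a.length := by
  rw [block]
  split_ifs <;> simp [length_reflW, length_wplus ha]

lemma length_flatMap_const {f : ℕ → List ℕ} {n : ℕ} :
    ∀ {k : ℕ}, (∀ i < k, (f i).length = n) → ((List.range k).flatMap f).length = k * n := by
  intro k
  induction k with
  | zero => simp
  | succ k ih =>
    intro h
    rw [List.range_succ, List.flatMap_append, List.length_append,
      ih (fun i hi => h i (by omega)), List.flatMap_cons, List.flatMap_nil]
    simp [h k (by omega), Nat.succ_mul]

lemma getD_flatMap_const {f : ℕ → List ℕ} {n : ℕ} (hn : 0 < n) :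
    ∀ {k : ℕ}, (∀ i < k, (f i).length = n) → ∀ r, r < k * n →
      ((List.range k).flatMap f).getD r 0 = (f (r / n)).getD (r % n) 0 := by
  intro k
  induction k with
  | zero => intro _ r hr; omega
  | succ k ih =>
    intro h r hr
    have hsucc : (k + 1) * n = k * n + n := Nat.succ_mul k n
    rw [List.range_succ, List.flatMap_append]
    have hlen : ((List.range k).flatMap f).length = k * n :=
      length_flatMap_const (fun i hi => h i (by omega))
    by_cases hc : r < k * n
    · rw [List.getD_append _ _ _ _ (by omega), ih (fun i hi => h i (by omega)) r hc]
    · rw [List.getD_append_right _ _ _ _ (by omega)]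
      have hdiv : r / n = k := by
        apply Nat.div_eq_of_lt_le (by omega)
        rw [Nat.succ_mul]; omega
      have hmod : r % n = r - k * n := by
        have := Nat.div_add_mod r n
        rw [hdiv, Nat.mul_comm] at this
        omega
      rw [hdiv, hmod, List.flatMap_cons, List.flatMap_nil, List.append_nil, hlen]

lemma flatMap_range_congr {f g : ℕ → List ℕ} {k : ℕ} (h : ∀ i < k, f i = g i) :
    (List.range k).flatMap f = (List.range k).flatMap g := by
  rw [List.flatMap_def, List.flatMap_def]
  exact congrArg List.flatten (List.map_congr_left (fun i hi => h i (List.mem_range.1 hi)))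

lemma length_run {M : ℕ} {a : List ℕ} (ha : a ≠ []) (p : ℕ) (w : List ℕ) :
    (run M a p w).length = a.length * w.length := by
  rw [run, length_flatMap_const (fun i _ => length_block ha _ _), Nat.mul_comm]

lemma run_getD {M : ℕ} {a : List ℕ} (ha : a ≠ []) (p : ℕ) (w : List ℕ) {r : ℕ}
    (hr : r < a.length * w.length) :
    (run M a p w).getD r 0 =
      (block M a (if r / a.length = 0 then p else w.getD (r / a.length - 1) 0)
        (w.getD (r / a.length) 0)).getD (r % a.length) 0 := by
  rw [run]
  exact getD_flatMap_const (List.length_pos_iff.2 ha) (fun i _ => length_block ha _ _) r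
    (by rw [Nat.mul_comm]; exact hr)

lemma run_nil (M : ℕ) (a : List ℕ) (p : ℕ) : run M a p [] = [] := by
  simp [run]

lemma run_concat (M : ℕ) (a : List ℕ) (p d : ℕ) (w : List ℕ) :
    run M a p (w ++ [d]) = run M a p w ++ block M a (lastD w p) d := by
  rw [run, run, show (w ++ [d]).length = w.length + 1 by simp, List.range_succ,
    List.flatMap_append]
  congr 1
  · apply flatMap_range_congr
    intro i hi
    have h1 : (w ++ [d]).getD i 0 = w.getD i 0 := List.getD_append _ _ _ _ hi
    by_cases h0 : i = 0
    · simp [h0] at h1 ⊢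
      rw [h1]
    · rw [if_neg h0, if_neg h0, h1, List.getD_append _ _ _ _ (by omega)]
  · rw [List.flatMap_cons, List.flatMap_nil, List.append_nil]
    have hcur : (w ++ [d]).getD w.length 0 = d := by
      rw [List.getD_append_right _ _ _ _ (le_refl _)]
      simp
    rcases eq_or_ne w [] with rfl | hw
    · simp [lastD]
    · have hl : 0 < w.length := List.length_pos_iff.2 hw
      rw [if_neg (by omega), hcur, List.getD_append _ _ _ _ (by omega), lastD, if_neg hw]

lemma run_append (M : ℕ) (a : List ℕ) (p : ℕ) (u v : List ℕ) :
    run M a p (u ++ v) = run M a p u ++ run M a (lastD u p) v := by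
  rw [run, run, run, List.length_append, List.range_add, List.flatMap_append,
    List.flatMap_map]
  congr 1
  · apply flatMap_range_congr
    intro i hi
    have h1 : (u ++ v).getD i 0 = u.getD i 0 := List.getD_append _ _ _ _ hi
    by_cases h0 : i = 0
    · simp [h0] at h1 ⊢
      rw [h1]
    · rw [if_neg h0, if_neg h0, h1, List.getD_append _ _ _ _ (by omega)]
  · apply flatMap_range_congr
    intro i hi
    have hcur : (u ++ v).getD (u.length + i) 0 = v.getD i 0 := by
      rw [List.getD_append_right _ _ _ _ (by omega)]
      congr 1
      omega
    rcases eq_or_ne u [] with rfl | hu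
    · simp [lastD]
    · have hl : 0 < u.length := List.length_pos_iff.2 hu
      rw [if_neg (by omega), hcur]
      by_cases h0 : i = 0
      · rw [h0, if_pos rfl, lastD, if_neg hu]
        rw [show u.length + 0 - 1 = u.length - 1 by omega,
          List.getD_append _ _ _ _ (by omega)]
      · rw [if_neg h0, show u.length + i - 1 = u.length + (i - 1) by omega,
          List.getD_append_right _ _ _ _ (by omega)]
        congr 2
        omega

lemma reflW_reflW {M : ℕ} {w : List ℕ} (h : ∀ d ∈ w, d ≤ M) :
    reflW M (reflW M w) = w := by
  rw [reflW, reflW, List.map_map]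
  conv_rhs => rw [← List.map_id w]
  refine List.map_congr_left (fun d hd => ?_)
  have := h d hd
  simp only [Function.comp_apply, id_eq]
  omega

lemma getD_reflW {M : ℕ} {w : List ℕ} {i : ℕ} (hi : i < w.length) :
    (reflW M w).getD i 0 = M - w.getD i 0 := by
  rw [List.getD_eq_getElem _ _ (by rw [length_reflW]; exact hi),
    List.getD_eq_getElem _ _ hi]
  simp [reflW]

lemma getD_le_one {w : List ℕ} (h : ∀ d ∈ w, d ≤ 1) (i : ℕ) : w.getD i 0 ≤ 1 := by
  by_cases hi : i < w.length
  · rw [List.getD_eq_getElem _ _ hi]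
    exact h _ (List.getElem_mem hi)
  · rw [List.getD_eq_default _ _ (by omega)]
    omega

lemma lastD_le_one {w : List ℕ} {p : ℕ} (h : ∀ d ∈ w, d ≤ 1) (hp : p ≤ 1) :
    lastD w p ≤ 1 := by
  rw [lastD]
  split_ifs
  · exact hp
  · exact getD_le_one h _

section Main

variable {M : ℕ} {a b : List ℕ}

lemma block00 : block M a 0 0 = a := rfl
lemma block01 : block M a 0 1 = wplus a := rfl
lemma block10 : block M a 1 0 = reflW M (wplus a) := rfl
lemma block11 : block M a 1 1 = reflW M a := rfl

/-- Hypotheses on `a` extracted from fundamentality. -/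
structure GoodA (M : ℕ) (a : List ℕ) : Prop where
  ne : a ≠ []
  le : ∀ d ∈ a, d ≤ M
  last_lt : a.getD (a.length - 1) 0 < M

/-- Hypotheses on `b` extracted from fundamentality over `{0,1}`. -/
structure GoodB (b : List ℕ) : Prop where
  ne : b ≠ []
  le : ∀ d ∈ b, d ≤ 1
  last_eq : b.getD (b.length - 1) 0 = 0

lemma wplus_le (hA : GoodA M a) : ∀ d ∈ wplus a, d ≤ M := by
  intro d hd
  rw [wplus] at hd
  rcases List.mem_append.1 hd with h | h
  · exact hA.le d (List.dropLast_subset a h)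
  · have : d = a.getLast! + 1 := by simpa using h
    obtain ⟨u, x, rfl⟩ := exists_concat hA.ne
    rw [getLast!_concat] at this
    have := hA.last_lt
    rw [getD_concat_last] at this
    omega

lemma reflW_block (hA : GoodA M a) {p q : ℕ} (hp : p ≤ 1) (hq : q ≤ 1) :
    reflW M (block M a p q) = block M a (1 - p) (1 - q) := by
  interval_cases p <;> interval_cases q <;>
    simp [block00, block01, block10, block11, reflW_reflW hA.le,
      reflW_reflW (wplus_le hA)]

lemma block_one (hA : GoodA M a) (p : ℕ) : block M a p 1 = wplus (block M a p 0) := by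
  obtain ⟨u, x, hux⟩ := exists_concat hA.ne
  have hx : x < M := by have := hA.last_lt; rw [hux, getD_concat_last] at this; exact this
  by_cases hp : p = 1
  · subst hp
    rw [block11, block10, hux, wplus_concat, reflW_concat, reflW_concat, wplus_concat]
    congr 2
    omega
  · rw [block, block, if_neg hp, if_neg hp, if_pos rfl, if_neg (by omega : ¬(0 = 1))]

lemma block_ne_nil {M : ℕ} {a : List ℕ} (ha : a ≠ []) (p q : ℕ) :
    block M a p q ≠ [] := by
  rw [← List.length_pos_iff, length_block ha]
  exact List.length_pos_iff.2 ha

lemma run_wplus (hA : GoodA M a) (hB : GoodB b) (p : ℕ) :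
    run M a p (wplus b) = wplus (run M a p b) := by
  obtain ⟨u, x, rfl⟩ := exists_concat hB.ne
  have hx : x = 0 := by have := hB.last_eq; rwa [getD_concat_last] at this
  subst hx
  rw [wplus_concat, run_concat, run_concat,
    wplus_append (block_ne_nil hA.ne _ _), block_one hA]

lemma run_reflW (hA : GoodA M a) {w : List ℕ} (hw : ∀ d ∈ w, d ≤ 1) {p : ℕ} (hp : p ≤ 1) :
    run M a (1 - p) (reflW 1 w) = reflW M (run M a p w) := by
  have hR : reflW M (run M a p w) =
      (List.range w.length).flatMap
        (fun i => reflW M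
          (block M a (if i = 0 then p else w.getD (i - 1) 0) (w.getD i 0))) := by
    rw [run, reflW, List.map_flatMap]
    rfl
  rw [hR, run, length_reflW]
  apply flatMap_range_congr
  intro i hi
  have h2 : reflW M (block M a (if i = 0 then p else w.getD (i - 1) 0) (w.getD i 0)) =
      block M a (1 - if i = 0 then p else w.getD (i - 1) 0) (1 - w.getD i 0) :=
    reflW_block hA
      (by split_ifs with h; exacts [hp, getD_le_one hw _]) (getD_le_one hw _)
  rw [h2, getD_reflW (M := 1) hi]
  congr 1
  by_cases h0 : i = 0
  · simp [h0]
  · rw [if_neg h0, if_neg h0, getD_reflW (M := 1) (by omega)]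

lemma key (hA : GoodA M a) (hB : GoodB b) {p q : ℕ} (hp : p ≤ 1) (hq : q ≤ 1) :
    block M (run M a 0 b) p q = run M a p (block 1 b p q) := by
  have hwb : ∀ d ∈ wplus b, d ≤ 1 :=
    wplus_le (M := 1) ⟨hB.ne, hB.le, by rw [hB.last_eq]; omega⟩
  interval_cases p <;> interval_cases q
  · rw [block00, block00]
  · rw [block01, block01]
    exact (run_wplus hA hB 0).symm
  · rw [block10, block10]
    have := run_reflW hA hwb (p := 0) (by norm_num)
    simp only [Nat.sub_zero] at this
    rw [this, run_wplus hA hB 0]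
  · rw [block11, block11]
    have := run_reflW hA hB.le (p := 0) (by norm_num)
    simp only [Nat.sub_zero] at this
    rw [this]

lemma block_lastD_one (hB : GoodB b) {p q : ℕ} (hp : p ≤ 1) (hq : q ≤ 1) :
    (block 1 b p q).getD ((block 1 b p q).length - 1) 0 = q := by
  obtain ⟨u, x, rfl⟩ := exists_concat hB.ne
  have hx : x = 0 := by have := hB.last_eq; rwa [getD_concat_last] at this
  subst hx
  interval_cases p <;> interval_cases q
  · rw [block00, getD_concat_last]
  · rw [block01, wplus_concat, getD_concat_last]
  · rw [block10, wplus_concat, reflW_concat, getD_concat_last]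
  · rw [block11, reflW_concat, getD_concat_last]

lemma lastD_run_b (hB : GoodB b) {x : List ℕ} (hx : ∀ d ∈ x, d ≤ 1) {p : ℕ} (hp : p ≤ 1) :
    lastD (run 1 b p x) p = lastD x p := by
  induction x using List.reverseRecOn with
  | nil => rw [run_nil]
  | append_singleton w d ih =>
    have hw : ∀ e ∈ w, e ≤ 1 := fun e he => hx e (List.mem_append_left _ he)
    have hd : d ≤ 1 := hx d (List.mem_append_right _ (by simp))
    have hblock_ne : block 1 b (lastD w p) d ≠ [] := by
      rw [← List.length_pos_iff, length_block hB.ne]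
      exact List.length_pos_iff.2 hB.ne
    rw [run_concat, lastD_append p hblock_ne, lastD_append p (by simp)]
    rw [lastD, if_neg hblock_ne, block_lastD_one hB (lastD_le_one hw hp) hd, lastD, if_neg (by simp)]
    simp

lemma main_fin (hA : GoodA M a) (hB : GoodB b) {x : List ℕ} (hx : ∀ d ∈ x, d ≤ 1)
    {p : ℕ} (hp : p ≤ 1) :
    run M (run M a 0 b) p x = run M a p (run 1 b p x) := by
  induction x using List.reverseRecOn with
  | nil => rw [run_nil, run_nil, run_nil]
  | append_singleton w d ih =>
    have hw : ∀ e ∈ w, e ≤ 1 := fun e he => hx e (List.mem_append_left _ he)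
    have hd : d ≤ 1 := hx d (List.mem_append_right _ (by simp))
    rw [run_concat, run_concat, run_append, ih hw, lastD_run_b hB hw hp,
      key hA hB (lastD_le_one hw hp) hd]


lemma take_one_eq {l : List ℕ} (hl : l ≠ []) : l.take 1 = [l.getD 0 0] := by
  cases l with
  | nil => exact absurd rfl hl
  | cons a t => rfl

lemma drop_last_eq {l : List ℕ} (hl : l ≠ []) :
    l.drop (l.length - 1) = [l.getD (l.length - 1) 0] := by
  obtain ⟨u, x, rfl⟩ := exists_concat hl
  have h1 : (u ++ [x]).length - 1 = u.length := by simp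
  rw [h1, List.drop_left]
  congr 1
  rw [List.getD_append_right _ _ _ _ le_rfl]
  simp

lemma wordLt_singleton {x y : ℕ} (h : wordLt [x] [y]) : x < y := by
  obtain ⟨n, _, hlt⟩ := h
  rcases n with _ | n
  · simpa [wordSeq] using hlt
  · exfalso
    have h1 : wordSeq [x] (n + 1) = 0 := by simp [wordSeq]
    have h2 : wordSeq [y] (n + 1) = 0 := by simp [wordSeq]
    omega

lemma goodA_of {M : ℕ} {a : List ℕ} (ha : IsFundamental M a) : GoodA M a := by
  obtain ⟨hle, hcase⟩ := ha
  rcases hcase with ⟨h1, _, _, h4⟩ | ⟨h2, hcond⟩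
  · obtain ⟨y, rfl⟩ := List.length_eq_one_iff.1 h1
    exact ⟨by simp, hle, by simpa using h4⟩
  · have hne : a ≠ [] := by rintro rfl; simp at h2
    refine ⟨hne, hle, ?_⟩
    have hlt := (hcond (a.length - 1) (by omega) (by omega)).2
    rw [show a.length - (a.length - 1) = 1 by omega, drop_last_eq hne,
      take_one_eq hne] at hlt
    have h5 := wordLt_singleton hlt
    have h6 : a.getD 0 0 ≤ M := by
      have hm : a.getD 0 0 ∈ a := by
        rw [List.getD_eq_getElem _ _ (List.length_pos_iff.2 hne)]
        exact List.getElem_mem _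
      exact hle _ hm
    omega

lemma goodB_of {b : List ℕ} (hb : IsFundamental 1 b) : GoodB b := by
  obtain ⟨hle, hcase⟩ := hb
  rcases hcase with ⟨_, h2, _, _⟩ | ⟨h2, hcond⟩
  · omega
  · have hne : b ≠ [] := by rintro rfl; simp at h2
    refine ⟨hne, hle, ?_⟩
    have hlt := (hcond (b.length - 1) (by omega) (by omega)).2
    rw [show b.length - (b.length - 1) = 1 by omega, drop_last_eq hne,
      take_one_eq hne] at hlt
    have h5 := wordLt_singleton hlt
    have h6 : b.getD 0 0 ≤ 1 := by
      have hm : b.getD 0 0 ∈ b := by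
        rw [List.getD_eq_getElem _ _ (List.length_pos_iff.2 hne)]
        exact List.getElem_mem _
      exact hle _ hm
    omega

end Main

end Statement3Aux

open Statement3Aux in

/-- Φ_{a∘b}⁻¹ = Φ_a⁻¹ ∘ Φ_b⁻¹, on finite and on infinite {0,1}-words starting
with the digit 1. -/
theorem statement3 (M : ℕ) (hM : 1 ≤ M) (a b : List ℕ)
    (ha : IsFundamental M a) (hb : IsFundamental 1 b) :
    (∀ x : List ℕ, (∀ d ∈ x, d ≤ 1) → x.getD 0 0 = 1 →
      phiInv M (phiInv M a b) x = phiInv M a (phiInv 1 b x)) ∧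
    (∀ x : ℕ → ℕ, (∀ i, x i ≤ 1) → x 0 = 1 →
      phiInvSeq M (phiInv M a b) x = phiInvSeq M a (phiInvSeq 1 b x)) := by
  have hA : GoodA M a := goodA_of ha
  have hB : GoodB b := goodB_of hb
  have hn0 : 0 < a.length := List.length_pos_iff.2 hA.ne
  have hm0 : 0 < b.length := List.length_pos_iff.2 hB.ne
  constructor
  · intro x hx _
    simp only [phiInv_eq_run]
    exact main_fin hA hB hx (by norm_num)
  · intro x hx _
    funext j
    set y := phiInvSeq 1 b x with hy
    have hc : (phiInv M a b).length = a.length * b.length := by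
      rw [phiInv_eq_run]; exact length_run hA.ne 0 b
    obtain ⟨q, hq⟩ : ∃ q, j / (a.length * b.length) = q := ⟨_, rfl⟩
    obtain ⟨r, hr⟩ : ∃ r, j % (a.length * b.length) = r := ⟨_, rfl⟩
    obtain ⟨s, hs⟩ : ∃ s, r / a.length = s := ⟨_, rfl⟩
    have hrlt : r < a.length * b.length := by
      rw [← hr]; exact Nat.mod_lt j (Nat.mul_pos hn0 hm0)
    have hslt : s < b.length := by
      rw [← hs]
      exact (Nat.div_lt_iff_lt_mul hn0).2 (by rw [Nat.mul_comm] at hrlt; exact hrlt)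
    have e1 := Nat.div_add_mod j (a.length * b.length)
    rw [hq, hr] at e1
    have e2 := Nat.div_add_mod r a.length
    rw [hs] at e2
    have hj1 : a.length * (q * b.length + s) + r % a.length = j := by
      calc a.length * (q * b.length + s) + r % a.length
          = a.length * b.length * q + (a.length * s + r % a.length) := by ring
        _ = a.length * b.length * q + r := by rw [e2]
        _ = j := e1
    have hjdiv : j / a.length = q * b.length + s := by
      conv_lhs => rw [← hj1]
      rw [Nat.mul_add_div hn0, Nat.div_eq_of_lt (Nat.mod_lt r hn0), add_zero]
    have hjmod : j % a.length = r % a.length := by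
      conv_lhs => rw [← hj1]
      rw [Nat.mul_add_mod, Nat.mod_eq_of_lt (Nat.mod_lt r hn0)]
    have hyval : ∀ Q S, S < b.length → y (Q * b.length + S) =
        (block 1 b (if Q = 0 then 0 else x (Q - 1)) (x Q)).getD S 0 := by
      intro Q S hS
      rw [hy]
      have hdiv : (Q * b.length + S) / b.length = Q := by
        rw [show Q * b.length + S = b.length * Q + S by ring, Nat.mul_add_div hm0,
          Nat.div_eq_of_lt hS, add_zero]
      have hmod : (Q * b.length + S) % b.length = S := by
        rw [show Q * b.length + S = b.length * Q + S by ring, Nat.mul_add_mod,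
          Nat.mod_eq_of_lt hS]
      simp only [phiInvSeq]
      rw [hdiv, hmod]
    have hpq : (if q = 0 then 0 else x (q - 1)) ≤ 1 := by
      split_ifs
      · omega
      · exact hx _
    simp only [phiInvSeq]
    rw [hc, hq, hr, hjdiv, hjmod, phiInv_eq_run, key hA hB hpq (hx q),
      run_getD hA.ne _ _ (by rw [length_block hB.ne]; exact hrlt), hs]
    have hcur : y (q * b.length + s) =
        (block 1 b (if q = 0 then 0 else x (q - 1)) (x q)).getD s 0 := hyval q s hslt
    have hprev : (if q * b.length + s = 0 then 0 else y (q * b.length + s - 1))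
        = (if s = 0 then (if q = 0 then 0 else x (q - 1))
            else (block 1 b (if q = 0 then 0 else x (q - 1)) (x q)).getD (s - 1) 0) := by
      rcases Nat.eq_zero_or_pos s with hs0 | hs0
      · subst hs0
        rcases Nat.eq_zero_or_pos q with hq0 | hq0
        · subst hq0
          simp
        · rw [if_neg (by have := Nat.mul_pos hq0 hm0; omega), if_pos rfl,
            if_neg (by omega : ¬ q = 0)]
          have e3 : q * b.length + 0 - 1 = (q - 1) * b.length + (b.length - 1) := by
            obtain ⟨q', rfl⟩ : ∃ q', q = q' + 1 := ⟨q - 1, by omega⟩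
            simp only [Nat.add_sub_cancel]
            have h : (q' + 1) * b.length = q' * b.length + b.length := by ring
            omega
          rw [e3, hyval (q - 1) (b.length - 1) (by omega)]
          have hlast := block_lastD_one hB
            (p := if q - 1 = 0 then 0 else x (q - 1 - 1)) (q := x (q - 1))
            (by split_ifs
                · omega
                · exact hx _) (hx _)
          rw [length_block hB.ne] at hlast
          rw [hlast]
      · rw [if_neg (by omega), if_neg (by omega),
          show q * b.length + s - 1 = q * b.length + (s - 1) by omega,
          hyval q (s - 1) (by omega)]
    rw [hcur, hprev]
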